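/- arXiv:2101.00162 — 6 statements merged into one kernel-verified Lean document; each statement's English description precedes it below -/
import Mathlib

section
/- Let M be a positive semidefinite operator on a finite-dimensional complex Hilbert space and x a vector. Then M ≥ |x⟩⟨x| (i.e., M − |x⟩⟨x| is positive semidefinite) if and only if there exists a vector h with ⟨h|h⟩ ≤ 1 such that √M |h⟩⟨h| √M = |x⟩⟨x| (equivalently, √M h = x). -/
open Matrix
open scoped ComplexOrder

/-- The square root of a positive semidefinite matrix, as `Matrix.PosSemidef.sqrt` was defined
in older Mathlib (removed since). -/
noncomputable def Matrix.PosSemidef.sqrt {n : Type*} [Fintype n] [DecidableEq n]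
    {A : Matrix n n ℂ} (hA : A.PosSemidef) : Matrix n n ℂ :=
  (hA.1.eigenvectorUnitary : Matrix n n ℂ) * diagonal ((↑) ∘ Real.sqrt ∘ hA.1.eigenvalues) *
    (star (hA.1.eigenvectorUnitary : Matrix n n ℂ))

theorem Matrix.PosSemidef.posSemidef_sqrt {n : Type*} [Fintype n] [DecidableEq n]
    {A : Matrix n n ℂ} (hA : A.PosSemidef) : hA.sqrt.PosSemidef := by
  unfold Matrix.PosSemidef.sqrt
  have hD : (diagonal ((↑) ∘ Real.sqrt ∘ hA.1.eigenvalues) : Matrix n n ℂ).PosSemidef := by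
    rw [posSemidef_diagonal_iff]
    intro i
    simp [Complex.zero_le_real, Real.sqrt_nonneg]
  exact hD.mul_mul_conjTranspose_same _

theorem Matrix.PosSemidef.sqrt_mul_self {n : Type*} [Fintype n] [DecidableEq n]
    {A : Matrix n n ℂ} (hA : A.PosSemidef) : hA.sqrt * hA.sqrt = A := by
  have h1 : star (hA.1.eigenvectorUnitary : Matrix n n ℂ) * hA.1.eigenvectorUnitary = 1 :=
    Unitary.star_mul_self_of_mem hA.1.eigenvectorUnitary.2
  have hD : (diagonal ((↑) ∘ Real.sqrt ∘ hA.1.eigenvalues) : Matrix n n ℂ) *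
      diagonal ((↑) ∘ Real.sqrt ∘ hA.1.eigenvalues) =
      diagonal (RCLike.ofReal ∘ hA.1.eigenvalues) := by
    rw [diagonal_mul_diagonal]; congr 1; funext i
    simp only [Function.comp_apply]
    rw [← Complex.ofReal_mul, Real.mul_self_sqrt (hA.eigenvalues_nonneg i)]; rfl
  conv_rhs => rw [hA.1.spectral_theorem]
  rw [Unitary.conjStarAlgAut_apply]
  unfold Matrix.PosSemidef.sqrt
  simp only [Matrix.mul_assoc]
  rw [← Matrix.mul_assoc (star (hA.1.eigenvectorUnitary : Matrix n n ℂ)), h1, Matrix.one_mul,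
    ← Matrix.mul_assoc (diagonal _) (diagonal _), hD]

namespace PsdAux

lemma dot_self {n : ℕ} (a : Fin n → ℂ) :
    star a ⬝ᵥ a = ((∑ i, Complex.normSq (a i) : ℝ) : ℂ) := by
  simp [dotProduct, Complex.normSq_eq_conj_mul_self]

lemma vecMulVec_mulVec' {n : ℕ} (x y : Fin n → ℂ) :
    vecMulVec x (star x) *ᵥ y = (star x ⬝ᵥ y) • x := by
  ext i
  simp [vecMulVec_apply, mulVec, dotProduct, Finset.mul_sum, mul_comm, mul_assoc, mul_left_comm]

lemma dot_rankOne {n : ℕ} (x y : Fin n → ℂ) :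
    star y ⬝ᵥ (vecMulVec x (star x) *ᵥ y) =
      ((Complex.normSq (star x ⬝ᵥ y) : ℝ) : ℂ) := by
  rw [vecMulVec_mulVec', dotProduct_smul]
  have h1 : star y ⬝ᵥ x = star (star x ⬝ᵥ y) := by
    rw [star_dotProduct]
  rw [smul_eq_mul, h1, Complex.normSq_eq_conj_mul_self]
  exact mul_comm _ _

lemma star_dot_mulVec {n : ℕ} (S : Matrix (Fin n) (Fin n) ℂ) (hS : Sᴴ = S)
    (a b : Fin n → ℂ) : star (S *ᵥ a) ⬝ᵥ b = star a ⬝ᵥ (S *ᵥ b) := by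
  rw [star_mulVec, hS, ← dotProduct_mulVec]

lemma inner_eq_dot {n : ℕ} (a b : Fin n → ℂ) :
    (inner ℂ ((WithLp.equiv 2 (Fin n → ℂ)).symm a) ((WithLp.equiv 2 (Fin n → ℂ)).symm b) : ℂ)
      = star a ⬝ᵥ b :=
  (EuclideanSpace.inner_toLp_toLp a b).trans (dotProduct_comm _ _)

lemma piLp_equiv_toEuclideanLin_apply {n : ℕ} (M : Matrix (Fin n) (Fin n) ℂ)
    (v : EuclideanSpace ℂ (Fin n)) :
    WithLp.equiv 2 (Fin n → ℂ) (toEuclideanLin M v) = M *ᵥ WithLp.equiv 2 (Fin n → ℂ) v :=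
  rfl

lemma cs {n : ℕ} (a b : Fin n → ℂ) :
    Complex.normSq (star a ⬝ᵥ b) ≤
      (∑ i, Complex.normSq (a i)) * (∑ i, Complex.normSq (b i)) := by
  set a' := (WithLp.equiv 2 (Fin n → ℂ)).symm a with ha'
  set b' := (WithLp.equiv 2 (Fin n → ℂ)).symm b with hb'
  have key : ∀ c : Fin n → ℂ, ‖(WithLp.equiv 2 (Fin n → ℂ)).symm c‖ ^ 2
      = ∑ i, Complex.normSq (c i) := by
    intro c
    have h := inner_eq_dot c c
    rw [dot_self, inner_self_eq_norm_sq_to_K (𝕜 := ℂ)] at h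
    have h2 : ((‖(WithLp.equiv 2 (Fin n → ℂ)).symm c‖ ^ 2 : ℝ) : ℂ)
        = ((∑ i, Complex.normSq (c i) : ℝ) : ℂ) := by
      push_cast
      push_cast at h
      exact h
    exact_mod_cast h2
  have ha : ‖a'‖ ^ 2 = ∑ i, Complex.normSq (a i) := key a
  have hb : ‖b'‖ ^ 2 = ∑ i, Complex.normSq (b i) := key b
  have hcs : ‖(inner ℂ a' b' : ℂ)‖ ≤ ‖a'‖ * ‖b'‖ := norm_inner_le_norm a' b'
  have h1 : Complex.normSq (star a ⬝ᵥ b) = ‖(inner ℂ a' b' : ℂ)‖ ^ 2 := by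
    rw [inner_eq_dot, ← Complex.sq_norm]
  rw [h1, ← ha, ← hb]
  calc ‖(inner ℂ a' b' : ℂ)‖ ^ 2 ≤ (‖a'‖ * ‖b'‖) ^ 2 := by
        apply sq_le_sq' _ hcs
        nlinarith [norm_nonneg (inner ℂ a' b' : ℂ), mul_nonneg (norm_nonneg a') (norm_nonneg b')]
    _ = ‖a'‖ ^ 2 * ‖b'‖ ^ 2 := by ring

lemma surj_aux {n : ℕ} (M : Matrix (Fin n) (Fin n) ℂ) (hM : M.IsHermitian)
    (x : Fin n → ℂ) (hx : ∀ y, M *ᵥ y = 0 → star x ⬝ᵥ y = 0) :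
    ∃ y, M *ᵥ y = x := by
  set T := Matrix.toEuclideanLin M with hT
  have hsym : T.IsSymmetric := (Matrix.isHermitian_iff_isSymmetric).1 hM
  set R := LinearMap.range T with hR
  have hx' : (WithLp.equiv 2 (Fin n → ℂ)).symm x ∈ Rᗮᗮ := by
    rw [Submodule.mem_orthogonal]
    intro y hy
    have hTy : T y = 0 := by
      rw [← inner_self_eq_zero (𝕜 := ℂ)]
      rw [← hsym (T y) y]
      exact (Submodule.mem_orthogonal R y).1 hy _ (LinearMap.mem_range_self T _)
    have hMy : M *ᵥ (WithLp.equiv 2 (Fin n → ℂ) y) = 0 := by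
      have := congrArg (WithLp.equiv 2 (Fin n → ℂ)) hTy
      rw [PsdAux.piLp_equiv_toEuclideanLin_apply] at this; simpa using this
    have h0 := hx _ hMy
    have : (inner ℂ ((WithLp.equiv 2 (Fin n → ℂ)).symm x) y : ℂ) = 0 := by
      calc (inner ℂ ((WithLp.equiv 2 (Fin n → ℂ)).symm x) y : ℂ)
          = inner ℂ ((WithLp.equiv 2 (Fin n → ℂ)).symm x)
              ((WithLp.equiv 2 (Fin n → ℂ)).symm (WithLp.equiv 2 (Fin n → ℂ) y)) := by simp
        _ = star x ⬝ᵥ (WithLp.equiv 2 (Fin n → ℂ) y) :=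
            PsdAux.inner_eq_dot x _
        _ = 0 := h0
    rw [← inner_conj_symm, this, map_zero]
  rw [Submodule.orthogonal_orthogonal] at hx'
  obtain ⟨y, hy⟩ := hx'
  refine ⟨WithLp.equiv 2 (Fin n → ℂ) y, ?_⟩
  have := congrArg (WithLp.equiv 2 (Fin n → ℂ)) hy
  rwa [PsdAux.piLp_equiv_toEuclideanLin_apply] at this

end PsdAux

/-- For a positive semidefinite `M` and vector `x`, one has
`M ≥ |x⟩⟨x|` iff there is a vector `h` with `⟨h|h⟩ ≤ 1` and `√M h = x`. -/
theorem psd_ge_rankOne_iff {n : ℕ} (M : Matrix (Fin n) (Fin n) ℂ)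
    (hM : M.PosSemidef) (x : Fin n → ℂ) :
    (M - vecMulVec x (star x)).PosSemidef ↔
      ∃ h : Fin n → ℂ, (∑ i, Complex.normSq (h i)) ≤ 1 ∧ hM.sqrt *ᵥ h = x := by
  set S := hM.sqrt with hSdef
  have hS : S.PosSemidef := hM.posSemidef_sqrt
  have hSH : Sᴴ = S := hS.1
  have hSS : S * S = M := hM.sqrt_mul_self
  have hMdot : ∀ y : Fin n → ℂ, star y ⬝ᵥ (M *ᵥ y) =
      ((∑ i, Complex.normSq ((S *ᵥ y) i) : ℝ) : ℂ) := by
    intro y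
    rw [← hSS, ← mulVec_mulVec, ← PsdAux.star_dot_mulVec S hSH, PsdAux.dot_self]
  constructor
  · intro hP
    -- x is orthogonal to ker M
    have hker : ∀ y, M *ᵥ y = 0 → star x ⬝ᵥ y = 0 := by
      intro y hy
      have h2 := hP.dotProduct_mulVec_nonneg y
      rw [sub_mulVec, dotProduct_sub, hy, PsdAux.dot_rankOne] at h2
      simp only [dotProduct_zero, zero_sub] at h2
      have h3 : ((Complex.normSq (star x ⬝ᵥ y) : ℝ) : ℂ) ≤ 0 := neg_nonneg.mp h2
      have h4 : Complex.normSq (star x ⬝ᵥ y) ≤ 0 := by exact_mod_cast h3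
      have h0 : Complex.normSq (star x ⬝ᵥ y) = 0 :=
        le_antisymm h4 (Complex.normSq_nonneg _)
      exact Complex.normSq_eq_zero.mp h0
    obtain ⟨y, hy⟩ := PsdAux.surj_aux M hM.1 x hker
    refine ⟨S *ᵥ y, ?_, by rw [mulVec_mulVec, hSS, hy]⟩
    have hc : star x ⬝ᵥ y = ((∑ i, Complex.normSq ((S *ᵥ y) i) : ℝ) : ℂ) := by
      rw [← hy, ← hSS, ← mulVec_mulVec, PsdAux.star_dot_mulVec S hSH, PsdAux.dot_self]
    have h2 := hP.dotProduct_mulVec_nonneg y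
    rw [sub_mulVec, dotProduct_sub, hMdot y, PsdAux.dot_rankOne, hc,
      Complex.normSq_ofReal] at h2
    set s : ℝ := ∑ i, Complex.normSq ((S *ᵥ y) i) with hs
    have hsnn : 0 ≤ s := Finset.sum_nonneg fun i _ => Complex.normSq_nonneg _
    have h4 : (0 : ℝ) ≤ s - s * s := by
      have h3 : (0 : ℂ) ≤ ((s - s * s : ℝ) : ℂ) := by rw [Complex.ofReal_sub]; exact h2
      exact_mod_cast h3
    nlinarith
  · rintro ⟨h, hh1, hhx⟩
    have hHerm : (vecMulVec x (star x)).IsHermitian := by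
      ext i j
      simp [conjTranspose_apply, vecMulVec_apply, mul_comm]
    refine .of_dotProduct_mulVec_nonneg (hM.1.sub hHerm) fun y => ?_
    rw [sub_mulVec, dotProduct_sub, hMdot y, PsdAux.dot_rankOne]
    have hc : star x ⬝ᵥ y = star h ⬝ᵥ (S *ᵥ y) := by
      rw [← hhx, PsdAux.star_dot_mulVec S hSH]
    have hcs := PsdAux.cs h (S *ᵥ y)
    set q : ℝ := ∑ i, Complex.normSq ((S *ᵥ y) i) with hq
    have hqnn : 0 ≤ q := Finset.sum_nonneg fun i _ => Complex.normSq_nonneg _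
    have hle : Complex.normSq (star x ⬝ᵥ y) ≤ q := by
      rw [hc]
      calc Complex.normSq (star h ⬝ᵥ (S *ᵥ y)) ≤ (∑ i, Complex.normSq (h i)) * q := hcs
        _ ≤ 1 * q := by apply mul_le_mul_of_nonneg_right hh1 hqnn
        _ = q := one_mul q
    have h5 : (0 : ℂ) ≤ ((q - Complex.normSq (star x ⬝ᵥ y) : ℝ) : ℂ) := by
      rw [Complex.zero_le_real]
      linarith
    push_cast at h5
    exact h5
end

section
/- Let W be an invertible Hermitian operator on B ⊗ Z such that the partial trace Tr_B W is also invertible, with W positive definite. Then I_A ⊗ W⁻¹ ≥ |Φ⟩⟨Φ| ⊗ (Tr_B W)⁻¹, where |Φ⟩ = Σ_i |i⟩_A ⊗ |i⟩_B is the unnormalized maximally entangled vector on A ⊗ B with dim A = dim B. -/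
set_option maxHeartbeats 1000000


open Matrix Kronecker
open scoped ComplexOrder

/-- Partial trace over the first factor `B` of an operator on `B ⊗ Z`. -/
noncomputable def ptraceB {nB nZ : ℕ} (W : Matrix (Fin nB × Fin nZ) (Fin nB × Fin nZ) ℂ) :
    Matrix (Fin nZ) (Fin nZ) ℂ :=
  Matrix.of fun z z' => ∑ b : Fin nB, W (b, z) (b, z')

/-- The unnormalized maximally entangled vector `|Φ⟩ = Σ_i |i⟩|i⟩` on `A ⊗ B`
(`dim A = dim B = n`). -/
def maxEnt (n : ℕ) : Fin n × Fin n → ℂ := fun p => if p.1 = p.2 then 1 else 0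

/-- The isometry-like embedding `J : Z → A ⊗ B ⊗ Z`, `J = |Φ⟩ ⊗ I_Z`. -/
def Jmat (n nZ : ℕ) : Matrix (Fin n × Fin n × Fin nZ) (Fin nZ) ℂ :=
  Matrix.of fun p z => (if p.1 = p.2.1 then 1 else 0) * (if p.2.2 = z then 1 else 0)

lemma kron_posDef {n nZ : ℕ} {W : Matrix (Fin n × Fin nZ) (Fin n × Fin nZ) ℂ}
    (hW : W.PosDef) : ((1 : Matrix (Fin n) (Fin n) ℂ) ⊗ₖ W).PosDef := by
  refine Matrix.PosDef.of_dotProduct_mulVec_pos ?_ ?_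
  · ext p q
    simp only [Matrix.conjTranspose_apply, kroneckerMap_apply, Matrix.one_apply,
      star_mul', apply_ite (star : ℂ → ℂ), star_one, star_zero, hW.isHermitian.apply,
      eq_comm]
  · intro x hx
    have hquad : star x ⬝ᵥ (((1 : Matrix (Fin n) (Fin n) ℂ) ⊗ₖ W) *ᵥ x) =
        ∑ a : Fin n, star (fun p => x (a, p)) ⬝ᵥ (W *ᵥ fun p => x (a, p)) := by
      simp only [dotProduct, mulVec, Fintype.sum_prod_type, kroneckerMap_apply,
        Matrix.one_apply, ite_mul, one_mul, zero_mul, Pi.star_apply, dotProduct]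
      refine Finset.sum_congr rfl fun a _ => ?_
      refine Finset.sum_congr rfl fun b _ => ?_
      refine Finset.sum_congr rfl fun z _ => ?_
      congr 1
      rw [Finset.sum_eq_single a (fun c _ hc => by simp [hc.symm]) (by simp)]
      simp
    rw [hquad]
    obtain ⟨⟨a0, p0⟩, hp⟩ : ∃ p, x p ≠ 0 := Function.ne_iff.mp hx
    have ha0 : (fun p => x (a0, p)) ≠ 0 := fun h => hp (congrFun h p0)
    refine Finset.sum_pos' (fun a _ => hW.posSemidef.dotProduct_mulVec_nonneg _) ⟨a0, Finset.mem_univ _, hW.dotProduct_mulVec_pos ha0⟩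

lemma JSJ_eq {n nZ : ℕ} (W : Matrix (Fin n × Fin nZ) (Fin n × Fin nZ) ℂ) :
    (Jmat n nZ)ᴴ * ((1 : Matrix (Fin n) (Fin n) ℂ) ⊗ₖ W) * Jmat n nZ = ptraceB W := by
  ext z z'
  simp only [Matrix.mul_apply, Matrix.conjTranspose_apply, Jmat, Matrix.of_apply,
    kroneckerMap_apply, Matrix.one_apply, ptraceB, Fintype.sum_prod_type,
    ite_mul, mul_ite, one_mul, mul_one, zero_mul, mul_zero, star_one, star_zero,
    Finset.sum_ite_eq, Finset.sum_ite_eq', Finset.mem_univ, if_true, apply_ite (star : ℂ → ℂ)]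
  refine Finset.sum_congr rfl fun a _ => ?_
  rw [Finset.sum_eq_single a (by intro b _ hb; simp [hb]) (by simp)]
  simp [Finset.sum_ite_eq, Finset.sum_ite_eq']

lemma of_eq_JTJ {n nZ : ℕ} (T : Matrix (Fin nZ) (Fin nZ) ℂ) :
    Matrix.of (fun (p q : Fin n × Fin n × Fin nZ) =>
        vecMulVec (maxEnt n) (star (maxEnt n)) (p.1, p.2.1) (q.1, q.2.1) *
          T p.2.2 q.2.2) = Jmat n nZ * T * (Jmat n nZ)ᴴ := by
  ext p q
  simp only [Matrix.mul_apply, Matrix.conjTranspose_apply, Jmat, Matrix.of_apply,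
    vecMulVec_apply, maxEnt, Pi.star_apply,
    ite_mul, mul_ite, one_mul, mul_one, zero_mul, mul_zero, Finset.sum_ite_eq,
    Finset.sum_ite_eq', Finset.mem_univ, if_true]
  by_cases h1 : p.1 = p.2.1 <;> by_cases h2 : q.1 = q.2.1 <;>
    simp [h1, h2, apply_ite (star : ℂ → ℂ), mul_ite, Finset.sum_ite_eq, mul_comm]

/-- If `W` is an invertible Hermitian (indeed positive definite) operator
on `B ⊗ Z` with `Tr_B W` invertible, then `I_A ⊗ W⁻¹ ≥ |Φ⟩⟨Φ| ⊗ (Tr_B W)⁻¹` in the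
Loewner order on `A ⊗ B ⊗ Z`. -/
theorem id_kron_inv_ge_maxEnt_kron_inv {n nZ : ℕ}
    (W : Matrix (Fin n × Fin nZ) (Fin n × Fin nZ) ℂ)
    (hHerm : W.IsHermitian) (hWinv : IsUnit W.det)
    (hTrBinv : IsUnit (ptraceB W).det) (hW : W.PosDef) :
    ((1 : Matrix (Fin n) (Fin n) ℂ) ⊗ₖ W⁻¹ -
      Matrix.of (fun (p q : Fin n × Fin n × Fin nZ) =>
        vecMulVec (maxEnt n) (star (maxEnt n)) (p.1, p.2.1) (q.1, q.2.1) *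
          (ptraceB W)⁻¹ p.2.2 q.2.2)).PosSemidef := by
  set S : Matrix (Fin n × Fin n × Fin nZ) (Fin n × Fin n × Fin nZ) ℂ :=
    (1 : Matrix (Fin n) (Fin n) ℂ) ⊗ₖ W with hSdef
  set J := Jmat n nZ with hJdef
  set T := ptraceB W with hTdef
  have hS : S.PosDef := kron_posDef hW
  have hJSJ : Jᴴ * S * J = T := JSJ_eq W
  have hT : T.IsHermitian := by
    rw [← hJSJ]; exact Matrix.isHermitian_conjTranspose_mul_mul J hS.isHermitian
  -- square root of S
  have hRps := hS.posSemidef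
  set R := (open scoped MatrixOrder in CFC.sqrt S) with hRdef
  have hRR : R * R = S := by open scoped MatrixOrder in exact CFC.sqrt_mul_sqrt_self S hRps.nonneg
  have hRH : R.IsHermitian := by
    open scoped MatrixOrder in exact (Matrix.nonneg_iff_posSemidef.mp (CFC.sqrt_nonneg S)).isHermitian
  have hSdet : IsUnit S.det := isUnit_iff_ne_zero.2 (ne_of_gt hS.det_pos)
  have hRdet : IsUnit R.det := by
    have : R.det * R.det = S.det := by rw [← Matrix.det_mul, hRR]
    exact isUnit_of_mul_isUnit_left (this ▸ hSdet)
  have hRinv : R⁻¹ * R = 1 := Matrix.nonsing_inv_mul R hRdet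
  have hRinv' : R * R⁻¹ = 1 := Matrix.mul_nonsing_inv R hRdet
  have hTinv : T⁻¹ * T = 1 := Matrix.nonsing_inv_mul T hTrBinv
  set P := R * (J * T⁻¹ * Jᴴ) * R with hPdef
  have hJTJ : (J * T⁻¹ * Jᴴ).IsHermitian := Matrix.isHermitian_mul_mul_conjTranspose J hT.inv
  have hPherm : P.IsHermitian := by
    have h := Matrix.isHermitian_conjTranspose_mul_mul R hJTJ
    rwa [hRH.eq] at h
  have hPP : P * P = P := by
    have h1 : (J * T⁻¹ * Jᴴ) * (R * R) * (J * T⁻¹ * Jᴴ) = J * T⁻¹ * Jᴴ := by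
      rw [hRR]
      calc J * T⁻¹ * Jᴴ * S * (J * T⁻¹ * Jᴴ)
          = J * T⁻¹ * (Jᴴ * S * J) * T⁻¹ * Jᴴ := by simp only [Matrix.mul_assoc]
        _ = J * T⁻¹ * Jᴴ := by
              rw [hJSJ]
              simp only [Matrix.mul_assoc]
              rw [← Matrix.mul_assoc T⁻¹ T (T⁻¹ * Jᴴ), hTinv, Matrix.one_mul]
    calc P * P = R * ((J * T⁻¹ * Jᴴ) * (R * R) * (J * T⁻¹ * Jᴴ)) * R := by
          rw [hPdef]; simp only [Matrix.mul_assoc]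
      _ = P := by rw [h1, hPdef]
  have h1P : (1 - P).PosSemidef := by
    have : (1 - P)ᴴ * (1 - P) = 1 - P := by
      have hPh : Pᴴ = P := hPherm.eq
      rw [Matrix.conjTranspose_sub, Matrix.conjTranspose_one, hPh]
      rw [Matrix.sub_mul, Matrix.mul_sub, Matrix.mul_sub, hPP]
      simp [Matrix.one_mul, Matrix.mul_one]
    rw [← this]
    exact Matrix.posSemidef_conjTranspose_mul_self _
  have key : (1 : Matrix (Fin n) (Fin n) ℂ) ⊗ₖ W⁻¹ -
      Matrix.of (fun (p q : Fin n × Fin n × Fin nZ) =>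
        vecMulVec (maxEnt n) (star (maxEnt n)) (p.1, p.2.1) (q.1, q.2.1) *
          T⁻¹ p.2.2 q.2.2) = (R⁻¹)ᴴ * (1 - P) * R⁻¹ := by
    have hK : (1 : Matrix (Fin n) (Fin n) ℂ) ⊗ₖ W⁻¹ = S⁻¹ := by
      rw [hSdef, Matrix.inv_kronecker, inv_one]
    have hSi : S⁻¹ = R⁻¹ * R⁻¹ := by rw [← hRR, Matrix.mul_inv_rev]
    have hRiH : (R⁻¹)ᴴ = R⁻¹ := by
      rw [Matrix.conjTranspose_nonsing_inv, hRH.eq]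
    rw [hK, of_eq_JTJ, hRiH, hSi, hPdef]
    rw [Matrix.mul_sub, Matrix.sub_mul, Matrix.mul_one]
    congr 1
    rw [← hJdef]
    symm
    calc R⁻¹ * (R * (J * T⁻¹ * Jᴴ) * R) * R⁻¹
        = (R⁻¹ * R) * (J * T⁻¹ * Jᴴ) * (R * R⁻¹) := by simp only [Matrix.mul_assoc]
      _ = J * T⁻¹ * Jᴴ := by rw [hRinv, hRinv', Matrix.one_mul, Matrix.mul_one]
  rw [key]
  exact h1P.conjTranspose_mul_mul_same R⁻¹
end

section
/- Let G be a compact subgroup of the unitary group on a finite-dimensional Hilbert space A, P = ∫_G U dU (Haar average) and T(ρ) = ∫_G U ρ U† dU. Then for every positive semidefinite ρ, P ρ P† ≤ T(ρ) in the Loewner order. -/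
open Matrix MeasureTheory
open scoped ComplexOrder

attribute [local instance] Matrix.normedAddCommGroup Matrix.normedSpace

noncomputable instance instCENormMatFin {n : ℕ} : ContinuousENorm (Matrix (Fin n) (Fin n) ℂ) :=
  SeminormedAddGroup.toContinuousENorm

set_option linter.unusedSectionVars false

section Aux

variable {n : ℕ} {G : Type*} [TopologicalSpace G] [CompactSpace G] [MeasurableSpace G]
  [BorelSpace G] {μ : Measure G} [IsFiniteMeasure μ]

local notation "M" => Matrix (Fin n) (Fin n) ℂ

/-- Continuous functions on a compact space are integrable (finite measure). -/
lemma aux_integrable {E : Type*} [NormedAddCommGroup E] {f : G → E} (hf : Continuous f) :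
    Integrable f μ := by
  rw [← integrableOn_univ]
  exact hf.continuousOn.integrableOn_compact' isCompact_univ MeasurableSet.univ

/-- conjTranspose as an ℝ-linear map on matrices. -/
noncomputable def ctLM : M →ₗ[ℝ] M where
  toFun A := Aᴴ
  map_add' A B := conjTranspose_add A B
  map_smul' r A := by
    ext i j
    simp [Matrix.conjTranspose_apply, Complex.real_smul]

lemma integral_conjTranspose {f : G → M} (hf : Integrable f μ) :
    ∫ g, (f g)ᴴ ∂μ = (∫ g, f g ∂μ)ᴴ := by
  have := (LinearMap.toContinuousLinearMap (ctLM (n := n))).integral_comp_comm hf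
  exact this

lemma integral_mul_const {f : G → M} (hf : Integrable f μ) (c : M) :
    ∫ g, f g * c ∂μ = (∫ g, f g ∂μ) * c := by
  have := (LinearMap.toContinuousLinearMap (LinearMap.mulRight ℂ c)).integral_comp_comm hf
  exact this

lemma integral_const_mul {f : G → M} (hf : Integrable f μ) (c : M) :
    ∫ g, c * f g ∂μ = c * ∫ g, f g ∂μ := by
  have := (LinearMap.toContinuousLinearMap (LinearMap.mulLeft ℂ c)).integral_comp_comm hf
  exact this

/-- quadratic form functional as a ℂ-linear map. -/
noncomputable def qfLM (x : Fin n → ℂ) : M →ₗ[ℂ] ℂ where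
  toFun A := star x ⬝ᵥ (A *ᵥ x)
  map_add' A B := by simp [Matrix.add_mulVec, dotProduct_add]
  map_smul' r A := by simp [Matrix.smul_mulVec, dotProduct_smul]

lemma integral_quadform {f : G → M} (hf : Integrable f μ) (x : Fin n → ℂ) :
    ∫ g, star x ⬝ᵥ (f g *ᵥ x) ∂μ = star x ⬝ᵥ ((∫ g, f g ∂μ) *ᵥ x) := by
  have := (LinearMap.toContinuousLinearMap (qfLM (n := n) x)).integral_comp_comm hf
  exact this

/-- integral of a pointwise positive semidefinite matrix function is PSD. -/
lemma integral_posSemidef {f : G → M} (hf : Integrable f μ)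
    (hpt : ∀ g, (f g).PosSemidef) : (∫ g, f g ∂μ).PosSemidef := by
  rw [Matrix.posSemidef_iff_dotProduct_mulVec]
  constructor
  · -- Hermitian
    have : ∫ g, (f g)ᴴ ∂μ = (∫ g, f g ∂μ)ᴴ := integral_conjTranspose hf
    unfold Matrix.IsHermitian
    rw [← this]
    have : (fun g => (f g)ᴴ) = f := by
      funext g; exact (hpt g).1
    rw [this]
  · intro x
    rw [← integral_quadform hf x]
    have hint : Integrable (fun g => star x ⬝ᵥ (f g *ᵥ x)) μ := by
      have := (LinearMap.toContinuousLinearMap (qfLM (n := n) x)).integrable_comp hf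
      exact this
    have hre : ∀ g, star x ⬝ᵥ (f g *ᵥ x) = ((star x ⬝ᵥ (f g *ᵥ x)).re : ℂ) := by
      intro g
      have h := (hpt g).dotProduct_mulVec_nonneg x
      rw [Complex.nonneg_iff] at h
      exact Complex.ext rfl h.2.symm
    calc (0 : ℂ) ≤ ((∫ g, (star x ⬝ᵥ (f g *ᵥ x)).re ∂μ : ℝ) : ℂ) := by
          rw [Complex.zero_le_real]
          apply integral_nonneg
          intro g
          have h := (hpt g).dotProduct_mulVec_nonneg x
          rw [Complex.nonneg_iff] at h
          exact h.1
      _ = ∫ g, star x ⬝ᵥ (f g *ᵥ x) ∂μ := by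
          have h2 : ∫ g, (((star x ⬝ᵥ f g *ᵥ x).re : ℝ) : ℂ) ∂μ =
              ((∫ g, (star x ⬝ᵥ f g *ᵥ x).re ∂μ : ℝ) : ℂ) := integral_ofReal
          rw [← h2]
          congr 1
          funext g
          exact (hre g).symm

end Aux

/-- Let `G` be a compact group acting by unitaries on `ℂⁿ` via `π`,
`P = ∫ U dU` the Haar average and `T(ρ) = ∫ U ρ U† dU` the twirl. Then for every positive
semidefinite `ρ`, `P ρ P† ≤ T(ρ)` in the Loewner order. -/
theorem haarAverage_conj_le_twirl {n : ℕ} {G : Type*} [Group G] [TopologicalSpace G]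
    [IsTopologicalGroup G] [CompactSpace G] [MeasurableSpace G] [BorelSpace G]
    (μ : Measure G) [μ.IsHaarMeasure] [IsProbabilityMeasure μ]
    (π : G →* Matrix.unitaryGroup (Fin n) ℂ)
    (hcont : Continuous fun g => (π g : Matrix (Fin n) (Fin n) ℂ))
    (ρ : Matrix (Fin n) (Fin n) ℂ) (hρ : ρ.PosSemidef) :
    ((∫ g, (π g : Matrix (Fin n) (Fin n) ℂ) * ρ * ((π g : Matrix (Fin n) (Fin n) ℂ))ᴴ ∂μ) -
      (∫ g, (π g : Matrix (Fin n) (Fin n) ℂ) ∂μ) * ρ *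
        (∫ g, (π g : Matrix (Fin n) (Fin n) ℂ) ∂μ)ᴴ).PosSemidef := by
  set U : G → Matrix (Fin n) (Fin n) ℂ := fun g => (π g : Matrix (Fin n) (Fin n) ℂ) with hU
  set P : Matrix (Fin n) (Fin n) ℂ := ∫ g, U g ∂μ with hP
  have hcU : Continuous U := hcont
  have hcUH : Continuous fun g => (U g)ᴴ := hcU.matrix_conjTranspose
  have hiU : Integrable U μ := aux_integrable hcU
  have hiUH : Integrable (fun g => (U g)ᴴ) μ := aux_integrable hcUH
  have hi1 : Integrable (fun g => U g * ρ * (U g)ᴴ) μ :=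
    aux_integrable ((hcU.matrix_mul continuous_const).matrix_mul hcUH)
  have hi2 : Integrable (fun g => U g * (ρ * Pᴴ)) μ :=
    aux_integrable (hcU.matrix_mul continuous_const)
  have hi3 : Integrable (fun g => P * ρ * (U g)ᴴ) μ :=
    aux_integrable (continuous_const.matrix_mul hcUH)
  have key : ∫ g, (U g - P) * ρ * (U g - P)ᴴ ∂μ =
      (∫ g, U g * ρ * (U g)ᴴ ∂μ) - P * ρ * Pᴴ := by
    have expand : (fun g => (U g - P) * ρ * (U g - P)ᴴ) =
        fun g => U g * ρ * (U g)ᴴ - U g * (ρ * Pᴴ) - (P * ρ * (U g)ᴴ - P * ρ * Pᴴ) := by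
      funext g
      simp only [conjTranspose_sub, Matrix.sub_mul, Matrix.mul_sub]
      noncomm_ring
    have e1 : ∫ g, (U g * ρ * (U g)ᴴ - U g * (ρ * Pᴴ)) - (P * ρ * (U g)ᴴ - P * ρ * Pᴴ) ∂μ =
        (∫ g, (U g * ρ * (U g)ᴴ - U g * (ρ * Pᴴ)) ∂μ) -
          ∫ g, (P * ρ * (U g)ᴴ - P * ρ * Pᴴ) ∂μ :=
      integral_sub (hi1.sub hi2) (hi3.sub (integrable_const (P * ρ * Pᴴ)))
    have e2 : ∫ g, (U g * ρ * (U g)ᴴ - U g * (ρ * Pᴴ)) ∂μ =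
        (∫ g, U g * ρ * (U g)ᴴ ∂μ) - ∫ g, U g * (ρ * Pᴴ) ∂μ := integral_sub hi1 hi2
    have e3 : ∫ g, (P * ρ * (U g)ᴴ - P * ρ * Pᴴ) ∂μ =
        (∫ g, P * ρ * (U g)ᴴ ∂μ) - ∫ g, (P * ρ * Pᴴ) ∂μ :=
      integral_sub hi3 (integrable_const (P * ρ * Pᴴ))
    rw [expand, e1, e2, e3, integral_mul_const hiU (ρ * Pᴴ), integral_const_mul hiUH (P * ρ),
      integral_conjTranspose hiU, integral_const, probReal_univ, one_smul,
      ← hP, ← Matrix.mul_assoc]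
    abel
  rw [← key]
  have hiD : Integrable (fun g => (U g - P) * ρ * (U g - P)ᴴ) μ :=
    aux_integrable (((hcU.sub continuous_const).matrix_mul continuous_const).matrix_mul
      (hcU.sub continuous_const).matrix_conjTranspose)
  exact integral_posSemidef hiD fun g => hρ.mul_mul_conjTranspose_same _
end

section
/- Let S₀ ⊆ L(A) be a unital C*-algebra and P the projector onto a subspace of A such that P is maximal among projectors satisfying P L(A) P ⊆ S for an S₀-graph S. Then P commutes with every element of S₀, i.e., P lies in the commutant S₀'. -/
open Matrix

variable {n : ℕ}

/-- `S₀ T S₀`: the span of products `K X L` with `K, L ∈ S₀` and `X ∈ T`. -/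
noncomputable def bimodSpan (S₀ : StarSubalgebra ℂ (Matrix (Fin n) (Fin n) ℂ))
    (T : Submodule ℂ (Matrix (Fin n) (Fin n) ℂ)) :
    Submodule ℂ (Matrix (Fin n) (Fin n) ℂ) :=
  Submodule.span ℂ {z | ∃ k ∈ S₀, ∃ x ∈ T, ∃ l ∈ S₀, z = k * x * l}

namespace MaxFullAux

/-- outer product `u vᴴ`. -/
def outer (u v : Fin n → ℂ) : Matrix (Fin n) (Fin n) ℂ :=
  Matrix.of fun i j => u i * star (v j)

lemma outer_conjTranspose (u v : Fin n → ℂ) : (outer u v)ᴴ = outer v u := by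
  ext i j
  simp [outer, conjTranspose_apply, mul_comm]

lemma mul_outer_mul (A B : Matrix (Fin n) (Fin n) ℂ) (x y : Fin n → ℂ) :
    A * outer x y * B = outer (A.mulVec x) (Bᴴ.mulVec y) := by
  ext i j
  simp only [outer, mul_apply, mulVec, dotProduct, of_apply, conjTranspose_apply,
    star_sum, star_mul', star_star, Finset.sum_mul, Finset.mul_sum]
  refine Finset.sum_congr rfl fun k _ => Finset.sum_congr rfl fun l _ => by ring

lemma outer_mul_mul_outer (u v w z : Fin n → ℂ) (X : Matrix (Fin n) (Fin n) ℂ) :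
    outer u v * X * outer w z = (∑ k, ∑ l, star (v k) * X k l * w l) • outer u z := by
  ext i j
  simp only [outer, mul_apply, of_apply, Matrix.smul_apply, smul_eq_mul,
    Finset.sum_mul, Finset.mul_sum]
  rw [Finset.sum_comm]
  refine Finset.sum_congr rfl fun k _ => Finset.sum_congr rfl fun l _ => by ring

lemma outer_mul_outer (u v w z : Fin n → ℂ) :
    outer u v * outer w z = (∑ k, star (v k) * w k) • outer u z := by
  ext i j
  simp only [outer, mul_apply, of_apply, Matrix.smul_apply, smul_eq_mul, Finset.sum_mul]
  refine Finset.sum_congr rfl fun k _ => by ring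

lemma outer_mulVec (u v w : Fin n → ℂ) :
    (outer u v).mulVec w = (∑ k, star (v k) * w k) • u := by
  ext i
  simp only [outer, mulVec, dotProduct, of_apply, Pi.smul_apply, smul_eq_mul, Finset.sum_mul]
  refine Finset.sum_congr rfl fun k _ => by ring

lemma outer_add_left (u u' v : Fin n → ℂ) : outer (u + u') v = outer u v + outer u' v := by
  ext i j; simp [outer, add_mul]

lemma outer_add_right (u v v' : Fin n → ℂ) : outer u (v + v') = outer u v + outer u v' := by
  ext i j; simp [outer, mul_add]

lemma outer_smul_left (c : ℂ) (u v : Fin n → ℂ) : outer (c • u) v = c • outer u v := by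
  ext i j; simp [outer, mul_assoc]

lemma outer_smul_right (c : ℂ) (u v : Fin n → ℂ) : outer u (c • v) = (star c) • outer u v := by
  ext i j; simp [outer]; ring

lemma outer_zero_left (v : Fin n → ℂ) : outer 0 v = 0 := by
  ext i j; simp [outer]

lemma outer_zero_right (u : Fin n → ℂ) : outer u 0 = 0 := by
  ext i j; simp [outer]

end MaxFullAux

open MaxFullAux in
/-- If `P` is a maximal `S`-full projector (`P L(A) P ⊆ S`) of an
`S₀`-graph `S`, then `P` commutes with every element of `S₀`, i.e. `P ∈ S₀'`. -/
theorem maximal_full_projector_mem_commutant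
    (S : Submodule ℂ (Matrix (Fin n) (Fin n) ℂ))
    (S₀ : StarSubalgebra ℂ (Matrix (Fin n) (Fin n) ℂ))
    (hSstar : ∀ X ∈ S, Xᴴ ∈ S) (hone : (1 : Matrix (Fin n) (Fin n) ℂ) ∈ S)
    (hsub : S₀.toSubmodule ≤ S) (hbimod : bimodSpan S₀ S = S)
    (P : Matrix (Fin n) (Fin n) ℂ) (hPh : Pᴴ = P) (hPP : P * P = P)
    (hfull : ∀ X : Matrix (Fin n) (Fin n) ℂ, P * X * P ∈ S)
    (hmax : ∀ Q : Matrix (Fin n) (Fin n) ℂ, Qᴴ = Q → Q * Q = Q →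
      (∀ X : Matrix (Fin n) (Fin n) ℂ, Q * X * Q ∈ S) → Q * P = P → Q = P) :
    ∀ Y ∈ S₀, P * Y = Y * P := by
  classical
  set g : Set (EuclideanSpace ℂ (Fin n)) :=
    {v | ∃ K ∈ S₀, ∃ x : Fin n → ℂ, v = (K * P).mulVec x} with hg
  set V : Submodule ℂ (EuclideanSpace ℂ (Fin n)) := Submodule.span ℂ g with hVdef
  -- outer products of elements of V lie in S
  have houter : ∀ u ∈ V, ∀ v ∈ V, outer u v ∈ S := by
    intro u hu v hv
    refine Submodule.span_induction₂ (p := fun (u v : EuclideanSpace ℂ (Fin n)) _ _ => outer u v ∈ S)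
      ?_ ?_ ?_ ?_ ?_ ?_ ?_ hu hv
    · rintro a b ⟨K, hK, x, hx⟩ ⟨L, hL, y, hy⟩
      rw [hx, hy]
      have key : outer ((K * P).mulVec x) ((L * P).mulVec y)
          = K * (P * outer x y * P) * Lᴴ := by
        rw [show ((L * P).mulVec y) = (((L * P)ᴴ)ᴴ).mulVec y by rw [conjTranspose_conjTranspose],
          ← mul_outer_mul (K * P) ((L * P)ᴴ) x y, conjTranspose_mul, hPh]
        simp only [Matrix.mul_assoc]
      rw [key, ← hbimod]
      exact Submodule.subset_span ⟨K, hK, _, hfull _, Lᴴ, star_mem hL, rfl⟩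
    · intro y _; rw [WithLp.ofLp_zero,
        outer_zero_left]; exact S.zero_mem
    · intro x _; rw [WithLp.ofLp_zero,
        outer_zero_right]; exact S.zero_mem
    · intro x y z _ _ _ h1 h2; rw [WithLp.ofLp_add,
        outer_add_left]; exact S.add_mem h1 h2
    · intro x y z _ _ _ h1 h2; rw [WithLp.ofLp_add,
        outer_add_right]; exact S.add_mem h1 h2
    · intro c x y _ _ h; rw [WithLp.ofLp_smul, outer_smul_left]
      exact S.smul_mem c h
    · intro c x y _ _ h; rw [WithLp.ofLp_smul,
        outer_smul_right]
      exact S.smul_mem _ h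
  -- orthonormal basis of V
  let b := stdOrthonormalBasis ℂ V
  let u : Fin (Module.finrank ℂ V) → (Fin n → ℂ) := fun a => ((b a : V) : EuclideanSpace ℂ (Fin n))
  have humem : ∀ a, (WithLp.toLp 2 (u a) : EuclideanSpace ℂ (Fin n)) ∈ V := fun a => (b a).2
  have horth : ∀ a a', (∑ k, star (u a k) * u a' k) = if a = a' then (1 : ℂ) else 0 := by
    intro a a'
    have h := orthonormal_iff_ite.mp b.orthonormal a a'
    rw [Submodule.coe_inner] at h
    simpa [PiLp.inner_apply, RCLike.inner_apply, u, mul_comm] using h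
  set Q : Matrix (Fin n) (Fin n) ℂ := ∑ a, outer (u a) (u a) with hQdef
  have hQh : Qᴴ = Q := by
    rw [hQdef, conjTranspose_sum]
    exact Finset.sum_congr rfl fun a _ => outer_conjTranspose _ _
  have hQQ : Q * Q = Q := by
    rw [hQdef, Finset.sum_mul]
    simp_rw [Finset.mul_sum, outer_mul_outer, horth, ite_smul, one_smul, zero_smul]
    simp
  have hQfull : ∀ X : Matrix (Fin n) (Fin n) ℂ, Q * X * Q ∈ S := by
    intro X
    rw [hQdef, Finset.sum_mul, Finset.sum_mul]
    refine S.sum_mem fun a _ => ?_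
    rw [Finset.mul_sum]
    refine S.sum_mem fun a' _ => ?_
    rw [show outer (u a) (u a) * X * outer (u a') (u a') =
      (∑ k, ∑ l, star (u a k) * X k l * u a' l) • outer (u a) (u a') from
      outer_mul_mul_outer _ _ _ _ _]
    exact S.smul_mem _ (houter _ (humem a) _ (humem a'))
  have hQfix : ∀ v : EuclideanSpace ℂ (Fin n), v ∈ V → Q.mulVec v = v := by
    intro v hv
    have h1 : Q.mulVec v = ∑ a, (∑ k, star (u a k) * v k) • u a := by
      ext i
      rw [hQdef]
      simp only [mulVec, dotProduct, Finset.sum_apply, Matrix.sum_apply, Finset.sum_mul]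
      rw [Finset.sum_comm]
      refine Finset.sum_congr rfl fun a _ => ?_
      simp only [Pi.smul_apply, smul_eq_mul, Finset.sum_mul, outer, of_apply]
      refine Finset.sum_congr rfl fun k _ => by ring
    have h2 : ∀ a, b.repr (⟨v, hv⟩ : V) a = ∑ k, star (u a k) * v k := by
      intro a
      rw [b.repr_apply_apply, Submodule.coe_inner]
      simp [PiLp.inner_apply, RCLike.inner_apply, u, mul_comm]
    have h3 := congrArg (Subtype.val) (b.sum_repr (⟨v, hv⟩ : V))
    rw [h1]
    calc (∑ a, (∑ k, star (u a k) * v k) • u a)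
        = ((∑ a, b.repr (⟨v, hv⟩ : V) a • b a : V) : EuclideanSpace ℂ (Fin n)) := by
          simp only [Submodule.coe_sum, Submodule.coe_smul, WithLp.ofLp_sum, WithLp.ofLp_smul]
          exact Finset.sum_congr rfl fun a _ => by rw [h2]
      _ = v := by rw [b.sum_repr]
  have hQK : ∀ K, K ∈ S₀ → Q * (K * P) = K * P := by
    intro K hK
    ext i j
    have hcolV : (WithLp.toLp 2 ((K * P).mulVec (Pi.single j 1)) : EuclideanSpace ℂ (Fin n)) ∈ V :=
      Submodule.subset_span ⟨K, hK, Pi.single j 1, rfl⟩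
    have h := congrFun (hQfix _ hcolV) i
    simpa [Matrix.mul_apply, Matrix.mulVec, dotProduct, Pi.single_apply, mul_ite] using h
  have hQP : Q * P = P := by
    have := hQK 1 (one_mem S₀)
    rwa [one_mul] at this
  have hQeq : Q = P := hmax Q hQh hQQ hQfull hQP
  intro Y hY
  have h1 : P * (Y * P) = Y * P := by
    have := hQK Y hY; rwa [hQeq] at this
  have h2 : P * (Yᴴ * P) = Yᴴ * P := by
    have := hQK Yᴴ (star_mem hY); rwa [hQeq] at this
  have h3 := congrArg conjTranspose h2
  simp only [conjTranspose_mul, conjTranspose_conjTranspose, hPh] at h3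
  calc P * Y = P * Y * P := h3.symm
    _ = Y * P := by rw [Matrix.mul_assoc]; exact h1
end

section
/- Let C ⊆ Herm(A) be a convex corner with dim A > 1. If C has a facet (a codimension-1 face cut out by a single supporting hyperplane), then C contains a positive definite element. -/
open Matrix
open scoped ComplexOrder

/-- A convex corner: a nonempty closed convex hereditary subset of the PSD cone. -/
def IsConvexCorner {n : ℕ} (C : Set (Matrix (Fin n) (Fin n) ℂ)) : Prop :=
  C.Nonempty ∧ IsClosed C ∧ Convex ℝ C ∧ (∀ A ∈ C, A.PosSemidef) ∧
    ∀ A ∈ C, ∀ B : Matrix (Fin n) (Fin n) ℂ, B.PosSemidef → (A - B).PosSemidef → B ∈ C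

/-- The anti-blocker `X♯ = {B ≥ 0 : Tr(AB) ≤ 1 for all A ∈ X}`. -/
def antiBlocker {n : ℕ} (C : Set (Matrix (Fin n) (Fin n) ℂ)) :
    Set (Matrix (Fin n) (Fin n) ℂ) :=
  {B | B.PosSemidef ∧ ∀ A ∈ C, ((A * B).trace).re ≤ 1}

section Aux

private lemma vecMulVec_mulVec' {n : ℕ} (a b x : Fin n → ℂ) :
    vecMulVec a b *ᵥ x = (b ⬝ᵥ x) • a := by
  ext i
  simp only [mulVec, dotProduct, vecMulVec_apply, Pi.smul_apply, smul_eq_mul]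
  rw [Finset.sum_mul]
  exact Finset.sum_congr rfl fun j _ => by ring

private noncomputable def Jeq {n : ℕ} :
    Matrix (Fin n) (Fin n) ℂ ≃ₗ[ℝ] Matrix (Fin n) (Fin n) ℂ :=
  LinearEquiv.ofLinear
    { toFun := fun M => Complex.I • M
      map_add' := fun M N => smul_add _ _ _
      map_smul' := fun r M => smul_comm _ _ _ }
    { toFun := fun M => -Complex.I • M
      map_add' := fun M N => smul_add _ _ _
      map_smul' := fun r M => smul_comm _ _ _ }
    (by ext M i j; simp [smul_smul]; ring_nf; simp [Complex.I_sq])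
    (by ext M i j; simp [smul_smul])

private lemma map_H_eq_S {n : ℕ} :
    (selfAdjoint.submodule ℝ (Matrix (Fin n) (Fin n) ℂ)).map (Jeq.toLinearMap) =
      skewAdjoint.submodule ℝ (Matrix (Fin n) (Fin n) ℂ) := by
  ext M
  constructor
  · rintro ⟨N, hN, rfl⟩
    have hN' : star N = N := hN
    show star _ = -_
    rw [Jeq]
    simp [star_smul, hN']
  · intro hM
    have hM' : star M = -M := hM
    refine ⟨-Complex.I • M, ?_, ?_⟩
    · show star _ = _
      rw [star_smul, hM']
      simp
    · rw [Jeq]; simp [smul_smul]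

private lemma HsupS {n : ℕ} : (selfAdjoint.submodule ℝ (Matrix (Fin n) (Fin n) ℂ)) ⊔
    (skewAdjoint.submodule ℝ (Matrix (Fin n) (Fin n) ℂ)) = ⊤ := by
  rw [eq_top_iff]
  intro M _
  refine Submodule.mem_sup.2 ⟨(2:ℝ)⁻¹ • (M + star M), ?_, (2:ℝ)⁻¹ • (M - star M), ?_, ?_⟩
  · show star _ = _
    rw [star_smul]
    simp [star_add, add_comm]
  · show star _ = -_
    rw [star_smul]
    simp [star_sub, smul_sub]
  · rw [← smul_add]
    module

private lemma HinfS {n : ℕ} : (selfAdjoint.submodule ℝ (Matrix (Fin n) (Fin n) ℂ)) ⊓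
    (skewAdjoint.submodule ℝ (Matrix (Fin n) (Fin n) ℂ)) = ⊥ := by
  rw [eq_bot_iff]
  rintro M ⟨h1, h2⟩
  have h1' : star M = M := h1
  have h2' : star M = -M := h2
  have : M = 0 := by
    have := h1'.symm.trans h2'
    ext i j
    have := congrFun (congrFun this i) j
    simp at this ⊢
    linear_combination this / 2
  simp [this]

private lemma finrank_H {n : ℕ} :
    Module.finrank ℝ (selfAdjoint.submodule ℝ (Matrix (Fin n) (Fin n) ℂ)) = n ^ 2 := by
  have htot : Module.finrank ℝ (Matrix (Fin n) (Fin n) ℂ) = 2 * n ^ 2 := by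
    rw [← Module.finrank_mul_finrank ℝ ℂ (Matrix (Fin n) (Fin n) ℂ),
      Complex.finrank_real_complex, Module.finrank_matrix]
    simp [Fintype.card_fin]
    ring
  have heq := Submodule.finrank_sup_add_finrank_inf_eq
    (selfAdjoint.submodule ℝ (Matrix (Fin n) (Fin n) ℂ))
    (skewAdjoint.submodule ℝ (Matrix (Fin n) (Fin n) ℂ))
  rw [HsupS, HinfS, finrank_top, finrank_bot, htot] at heq
  have hJ : Module.finrank ℝ (skewAdjoint.submodule ℝ (Matrix (Fin n) (Fin n) ℂ)) =
      Module.finrank ℝ (selfAdjoint.submodule ℝ (Matrix (Fin n) (Fin n) ℂ)) := by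
    rw [← map_H_eq_S]
    exact (LinearEquiv.finrank_map_eq Jeq (selfAdjoint.submodule ℝ (Matrix (Fin n) (Fin n) ℂ)))
  omega

private noncomputable def phiLM {n : ℕ} (a b : Fin n → ℂ) :
    Matrix (Fin n) (Fin n) ℂ →ₗ[ℝ] ℂ where
  toFun M := star a ⬝ᵥ (M *ᵥ b)
  map_add' M N := by simp [Matrix.add_mulVec, dotProduct_add]
  map_smul' r M := by simp [Matrix.smul_mulVec, dotProduct_smul]

private noncomputable def fLM {n : ℕ} (v w : Fin n → ℂ) :
    Matrix (Fin n) (Fin n) ℂ →ₗ[ℝ] ℝ × ℝ :=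
  LinearMap.prod (Complex.reLm.comp (phiLM v v))
    (Complex.reLm.comp (phiLM w v + phiLM v w))

private lemma dot_star_self {n : ℕ} (v : Fin n → ℂ) (hv : v ≠ 0) :
    ∃ c : ℝ, 0 < c ∧ star v ⬝ᵥ v = (c:ℂ) := by
  refine ⟨∑ i, Complex.normSq (v i), ?_, ?_⟩
  · have hex : ∃ i, v i ≠ 0 := by
      by_contra h; push_neg at h; exact hv (funext h)
    obtain ⟨i, hi⟩ := hex
    exact Finset.sum_pos' (fun j _ => Complex.normSq_nonneg _)
      ⟨i, Finset.mem_univ i, Complex.normSq_pos.2 hi⟩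
  · push_cast
    simp only [dotProduct, Pi.star_apply]
    exact Finset.sum_congr rfl fun i _ => by
      rw [Complex.normSq_eq_conj_mul_self]
      rfl

private lemma star_dot_comm {n : ℕ} {v w : Fin n → ℂ} (h : star v ⬝ᵥ w = 0) :
    star w ⬝ᵥ v = 0 := by
  have := congrArg star h
  rwa [star_dotProduct, star_star, star_zero] at this

private lemma fLM_surj {n : ℕ} (v w : Fin n → ℂ) (hv : v ≠ 0) (hw : w ≠ 0)
    (hvw : star v ⬝ᵥ w = 0) :
    Function.Surjective
      ((fLM v w).comp (selfAdjoint.submodule ℝ (Matrix (Fin n) (Fin n) ℂ)).subtype) := by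
  obtain ⟨c, hc, hcv⟩ := dot_star_self v hv
  obtain ⟨d, hd, hdw⟩ := dot_star_self w hw
  have hwv : star w ⬝ᵥ v = 0 := star_dot_comm hvw
  set A : Matrix (Fin n) (Fin n) ℂ := vecMulVec v (star v) with hA
  set B : Matrix (Fin n) (Fin n) ℂ := vecMulVec v (star w) + vecMulVec w (star v) with hB
  have hAH : A ∈ selfAdjoint.submodule ℝ (Matrix (Fin n) (Fin n) ℂ) := by
    show star A = A
    ext i j
    simp [hA, vecMulVec_apply, Matrix.star_apply, mul_comm]
  have hBH : B ∈ selfAdjoint.submodule ℝ (Matrix (Fin n) (Fin n) ℂ) := by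
    show star B = B
    ext i j
    simp [hB, vecMulVec_apply, Matrix.star_apply, Matrix.add_apply, mul_comm]
    ring
  have hAv : A *ᵥ v = (c:ℂ) • v := by rw [hA, vecMulVec_mulVec', hcv]
  have hAw : A *ᵥ w = 0 := by rw [hA, vecMulVec_mulVec', hvw, zero_smul]
  have hBv : B *ᵥ v = (c:ℂ) • w := by
    rw [hB, Matrix.add_mulVec, vecMulVec_mulVec', vecMulVec_mulVec', hwv, hcv, zero_smul, zero_add]
  have hBw : B *ᵥ w = (d:ℂ) • v := by
    rw [hB, Matrix.add_mulVec, vecMulVec_mulVec', vecMulVec_mulVec', hdw, hvw, zero_smul, add_zero]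
  have hfA : fLM v w A = (c^2, 0) := by
    simp only [fLM, LinearMap.prod_apply, LinearMap.comp_apply, LinearMap.add_apply, Function.prod]
    have e1 : phiLM v v A = (c:ℂ)^2 := by
      simp only [phiLM, LinearMap.coe_mk, AddHom.coe_mk, hAv, dotProduct_smul, hcv, smul_eq_mul]
      ring
    have e2 : phiLM w v A = 0 := by
      simp only [phiLM, LinearMap.coe_mk, AddHom.coe_mk, hAv, dotProduct_smul, hwv, smul_eq_mul,
        mul_zero]
    have e3 : phiLM v w A = 0 := by
      simp only [phiLM, LinearMap.coe_mk, AddHom.coe_mk, hAw, dotProduct_zero]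
    rw [e1, e2, e3]
    simp
    push_cast
    simp [pow_two]
  have hfB : fLM v w B = (0, 2*(c*d)) := by
    simp only [fLM, LinearMap.prod_apply, LinearMap.comp_apply, LinearMap.add_apply, Function.prod]
    have e1 : phiLM v v B = 0 := by
      simp only [phiLM, LinearMap.coe_mk, AddHom.coe_mk, hBv, dotProduct_smul, hvw, smul_eq_mul,
        mul_zero]
    have e2 : phiLM w v B = (c:ℂ)*(d:ℂ) := by
      simp only [phiLM, LinearMap.coe_mk, AddHom.coe_mk, hBv, dotProduct_smul, hdw, smul_eq_mul]
    have e3 : phiLM v w B = (d:ℂ)*(c:ℂ) := by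
      simp only [phiLM, LinearMap.coe_mk, AddHom.coe_mk, hBw, dotProduct_smul, hcv, smul_eq_mul]
    rw [e1, e2, e3]
    simp
    push_cast
    ring
  intro p
  refine ⟨(p.1 / c^2) • ⟨A, hAH⟩ + (p.2 / (2*(c*d))) • ⟨B, hBH⟩, ?_⟩
  rw [map_add, LinearMap.map_smul, LinearMap.map_smul]
  have hgA : ((fLM v w).comp (selfAdjoint.submodule ℝ (Matrix (Fin n) (Fin n) ℂ)).subtype)
      ⟨A, hAH⟩ = (c^2, 0) := by
    rw [LinearMap.comp_apply, Submodule.subtype_apply]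
    exact hfA
  have hgB : ((fLM v w).comp (selfAdjoint.submodule ℝ (Matrix (Fin n) (Fin n) ℂ)).subtype)
      ⟨B, hBH⟩ = (0, 2*(c*d)) := by
    rw [LinearMap.comp_apply, Submodule.subtype_apply]
    exact hfB
  rw [hgA, hgB]
  have hc2 : (c:ℝ)^2 ≠ 0 := by positivity
  have hcd : 2*(c*d) ≠ 0 := by positivity
  ext
  · simp [Prod.smul_mk]
    field_simp
  · simp [Prod.smul_mk]
    field_simp

end Aux

/-- If `dim A > 1` and a convex corner `C` has a facet (a set
`F = {X ∈ C : Tr(XY) = α}` cut out by a supporting hyperplane, of affine dimension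
`dim Herm(A) − 1 = n² − 1`), then `C` contains a positive definite element. -/
theorem facet_gives_posDef {n : ℕ} (hn : 1 < n) (C : Set (Matrix (Fin n) (Fin n) ℂ))
    (hC : IsConvexCorner C) (Y : Matrix (Fin n) (Fin n) ℂ) (hY : Y.IsHermitian)
    (α : ℝ) (hsupp : ∀ X ∈ C, ((X * Y).trace).re ≤ α)
    (hdim : Module.finrank ℝ
      (affineSpan ℝ {X ∈ C | ((X * Y).trace).re = α}).direction = n ^ 2 - 1) :
    ∃ M ∈ C, M.PosDef := by
  classical
  by_contra hcon
  push_neg at hcon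
  obtain ⟨hCne, hCcl, hCconv, hCpsd, hCher⟩ := hC
  set F : Set (Matrix (Fin n) (Fin n) ℂ) := {X ∈ C | ((X * Y).trace).re = α} with hF
  have hn2 : 4 ≤ n ^ 2 := by nlinarith
  -- F is nonempty
  have hFne : F.Nonempty := by
    by_contra hne
    rw [Set.not_nonempty_iff_eq_empty] at hne
    rw [hne, AffineSubspace.span_empty, AffineSubspace.direction_bot, finrank_bot] at hdim
    omega
  -- minimal kernel dimension point
  set kf : Matrix (Fin n) (Fin n) ℂ → ℕ :=
    fun X => Module.finrank ℂ (LinearMap.ker X.mulVecLin) with hkf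
  have hmem : sInf (kf '' F) ∈ kf '' F := Nat.sInf_mem (hFne.image kf)
  obtain ⟨X₀, hX₀F, hkX₀⟩ := hmem
  have hmin : ∀ X ∈ F, kf X₀ ≤ kf X := fun X hX => by
    rw [hkX₀]; exact Nat.sInf_le ⟨X, hX, rfl⟩
  have hX₀C : X₀ ∈ C := hX₀F.1
  have hX₀psd := hCpsd X₀ hX₀C
  -- a kernel vector for X₀
  obtain ⟨v, hv0, hvker⟩ : ∃ v, v ≠ 0 ∧ X₀ *ᵥ v = 0 := by
    have hnd := hcon X₀ hX₀C
    rw [Matrix.posDef_iff_dotProduct_mulVec] at hnd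
    push_neg at hnd
    obtain ⟨v, hv0, hvle⟩ := hnd hX₀psd.1
    refine ⟨v, hv0, ?_⟩
    rw [← hX₀psd.dotProduct_mulVec_zero_iff]
    by_contra hne
    exact hvle ((hX₀psd.dotProduct_mulVec_nonneg v).lt_of_ne (Ne.symm hne))
  -- v is in the kernel of every element of F
  have hker : ∀ X ∈ F, X *ᵥ v = 0 := by
    intro X hXF
    have hXC : X ∈ C := hXF.1
    have hXpsd := hCpsd X hXC
    set Z : Matrix (Fin n) (Fin n) ℂ := (1/2:ℝ) • X₀ + (1/2:ℝ) • X with hZ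
    have hZC : Z ∈ C := hCconv hX₀C hXC (by norm_num) (by norm_num) (by norm_num)
    have hZF : Z ∈ F := by
      refine ⟨hZC, ?_⟩
      have hZY : Z * Y = (1/2:ℝ) • (X₀ * Y) + (1/2:ℝ) • (X * Y) := by
        rw [hZ, Matrix.add_mul, Matrix.smul_mul, Matrix.smul_mul]
      rw [hZY, Matrix.trace_add, Matrix.trace_smul, Matrix.trace_smul]
      have h1 := hX₀F.2
      have h2 := hXF.2
      rw [Complex.add_re, Complex.real_smul, Complex.real_smul, Complex.re_ofReal_mul,
        Complex.re_ofReal_mul, h1, h2]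
      ring
    have hZpsd := hCpsd Z hZC
    have hsub : ∀ u, Z *ᵥ u = 0 → X₀ *ᵥ u = 0 ∧ X *ᵥ u = 0 := by
      intro u hu
      have h0 : star u ⬝ᵥ Z *ᵥ u = 0 := by rw [hu, dotProduct_zero]
      have hexp : star u ⬝ᵥ Z *ᵥ u =
          (1/2:ℝ) • (star u ⬝ᵥ X₀ *ᵥ u) + (1/2:ℝ) • (star u ⬝ᵥ X *ᵥ u) := by
        rw [hZ, Matrix.add_mulVec, Matrix.smul_mulVec, Matrix.smul_mulVec,
          dotProduct_add, dotProduct_smul, dotProduct_smul]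
      have ha := hX₀psd.dotProduct_mulVec_nonneg u
      have hb := hXpsd.dotProduct_mulVec_nonneg u
      have hsum : (star u ⬝ᵥ X₀ *ᵥ u) + (star u ⬝ᵥ X *ᵥ u) = 0 := by
        rw [hexp] at h0
        rw [Complex.real_smul, Complex.real_smul] at h0
        push_cast at h0
        linear_combination 2 * h0
      have ha0 : star u ⬝ᵥ X₀ *ᵥ u = 0 := by
        have hle : star u ⬝ᵥ X₀ *ᵥ u ≤ 0 := by
          rw [eq_neg_of_add_eq_zero_left hsum]
          exact neg_nonpos.2 hb
        exact le_antisymm hle ha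
      have hb0 : star u ⬝ᵥ X *ᵥ u = 0 := by
        rw [ha0, zero_add] at hsum
        exact hsum
      exact ⟨(hX₀psd.dotProduct_mulVec_zero_iff u).1 ha0,
        (hXpsd.dotProduct_mulVec_zero_iff u).1 hb0⟩
    have hkerle : LinearMap.ker Z.mulVecLin ≤ LinearMap.ker X₀.mulVecLin := by
      intro u hu
      rw [LinearMap.mem_ker, Matrix.mulVecLin_apply] at hu ⊢
      exact (hsub u hu).1
    have heqker : LinearMap.ker Z.mulVecLin = LinearMap.ker X₀.mulVecLin :=
      Submodule.eq_of_le_of_finrank_le hkerle (hmin Z hZF)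
    have hvZ : Z *ᵥ v = 0 := by
      have hv : v ∈ LinearMap.ker X₀.mulVecLin := by
        rw [LinearMap.mem_ker, Matrix.mulVecLin_apply]; exact hvker
      rw [← heqker, LinearMap.mem_ker, Matrix.mulVecLin_apply] at hv
      exact hv
    exact (hsub v hvZ).2
  -- a vector orthogonal to v
  obtain ⟨w, hw0, hvw⟩ : ∃ w, w ≠ 0 ∧ star v ⬝ᵥ w = 0 := by
    set ψ : (Fin n → ℂ) →ₗ[ℂ] ℂ :=
      { toFun := fun w => star v ⬝ᵥ w
        map_add' := fun a b => dotProduct_add _ _ _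
        map_smul' := fun c a => by simp [dotProduct_smul] } with hψ
    have hne : LinearMap.ker ψ ≠ ⊥ := by
      intro hbot
      have hinj : Function.Injective ψ := LinearMap.ker_eq_bot.mp hbot
      have hle := LinearMap.finrank_le_finrank_of_injective hinj
      rw [Module.finrank_self, Module.finrank_fin_fun] at hle
      omega
    obtain ⟨w, hwker, hw0⟩ := (Submodule.ne_bot_iff _).1 hne
    exact ⟨w, hw0, hwker⟩
  -- dimension count
  set H := selfAdjoint.submodule ℝ (Matrix (Fin n) (Fin n) ℂ) with hH
  set g := (fLM v w).comp H.subtype with hg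
  have hgsurj : Function.Surjective g := fLM_surj v w hv0 hw0 hvw
  have hFsub : F ⊆ ((Submodule.map H.subtype (LinearMap.ker g)) : Set _) := by
    intro X hXF
    have hXH : X ∈ H := (hCpsd X hXF.1).1
    refine ⟨⟨X, hXH⟩, ?_, rfl⟩
    simp only [SetLike.mem_coe, LinearMap.mem_ker, hg, LinearMap.comp_apply,
      Submodule.subtype_apply]
    have h1 : X *ᵥ v = 0 := hker X hXF
    have h2 : star v ᵥ* X = 0 := by
      have hst := Matrix.star_mulVec (M := Xᴴ) (v := v)
      rw [Matrix.conjTranspose_conjTranspose, (hCpsd X hXF.1).1.eq, h1, star_zero] at hst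
      exact hst.symm
    show fLM v w X = 0
    have e1 : phiLM v v X = 0 := by
      simp only [phiLM, LinearMap.coe_mk, AddHom.coe_mk, h1, dotProduct_zero]
    have e2 : phiLM w v X = 0 := by
      simp only [phiLM, LinearMap.coe_mk, AddHom.coe_mk, h1, dotProduct_zero]
    have e3 : phiLM v w X = 0 := by
      simp only [phiLM, LinearMap.coe_mk, AddHom.coe_mk, Matrix.dotProduct_mulVec, h2,
        zero_dotProduct]
    simp only [fLM, LinearMap.prod_apply, LinearMap.comp_apply, LinearMap.add_apply, Function.prod,
      e1, e2, e3]
    simp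
  have hle : (affineSpan ℝ F).direction ≤ Submodule.map H.subtype (LinearMap.ker g) := by
    have h1 : affineSpan ℝ F ≤ (Submodule.map H.subtype (LinearMap.ker g)).toAffineSubspace := by
      rw [affineSpan_le]
      intro x hx
      exact Submodule.mem_toAffineSubspace.2 (hFsub hx)
    have h2 := AffineSubspace.direction_le h1
    rwa [Submodule.toAffineSubspace_direction] at h2
  have hrank := Submodule.finrank_mono hle
  rw [hdim, Submodule.finrank_map_subtype_eq] at hrank
  have hrn : Module.finrank ℝ (LinearMap.range g) + Module.finrank ℝ (LinearMap.ker g) = n^2 := by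
    rw [LinearMap.finrank_range_add_finrank_ker g, hH, finrank_H]
  rw [LinearMap.range_eq_top.2 hgsurj, finrank_top] at hrn
  have hprod : Module.finrank ℝ (ℝ × ℝ) = 2 := by simp
  omega
end

section
/- Every nonzero vertex X of a convex corner C ⊆ PSD(A) is maximal: if Y ≥ X and Y ≠ X then Y ∉ C. (A vertex is a boundary point at which the intersection of all supporting hyperplanes has affine dimension 0.) -/
open Matrix
open scoped ComplexOrder

section Aux

variable {n : ℕ}

/-- Cauchy–Schwarz for the complex dot product. -/
private lemma cs_dot (u v : Fin n → ℂ) :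
    Complex.normSq (star u ⬝ᵥ v) ≤ (star u ⬝ᵥ u).re * (star v ⬝ᵥ v).re := by
  set u' := (WithLp.equiv 2 (Fin n → ℂ)).symm u with hu'
  set v' := (WithLp.equiv 2 (Fin n → ℂ)).symm v with hv'
  have h := norm_inner_le_norm (𝕜 := ℂ) u' v'
  have hinn : ∀ a b : Fin n → ℂ, inner ℂ ((WithLp.equiv 2 (Fin n → ℂ)).symm a)
      ((WithLp.equiv 2 (Fin n → ℂ)).symm b) = star a ⬝ᵥ b := by
    intro a b; rw [dotProduct_comm]; rfl
  rw [hinn] at h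
  have hu : (star u ⬝ᵥ u).re = ‖u'‖ ^ 2 := by
    rw [← inner_self_eq_norm_sq (𝕜 := ℂ) u', hinn]
    rfl
  have hv : (star v ⬝ᵥ v).re = ‖v'‖ ^ 2 := by
    rw [← inner_self_eq_norm_sq (𝕜 := ℂ) v', hinn]
    rfl
  have hn : Complex.normSq (star u ⬝ᵥ v) = ‖star u ⬝ᵥ v‖ ^ 2 := by
    rw [Complex.sq_norm]
  rw [hn, hu, hv]
  nlinarith [norm_nonneg u', norm_nonneg v', norm_nonneg (star u ⬝ᵥ v), h]

/-- Cauchy–Schwarz through a PSD matrix. -/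
private lemma psd_cs {M : Matrix (Fin n) (Fin n) ℂ} (hM : M.PosSemidef) (g x : Fin n → ℂ) :
    Complex.normSq (star x ⬝ᵥ M *ᵥ g) ≤ (star g ⬝ᵥ M *ᵥ g).re * (star x ⬝ᵥ M *ᵥ x).re := by
  obtain ⟨B, rfl⟩ : ∃ B : Matrix (Fin n) (Fin n) ℂ, M = Bᴴ * B := by
    open scoped MatrixOrder in exact CStarAlgebra.nonneg_iff_eq_star_mul_self.mp hM.nonneg
  have key : ∀ a b : Fin n → ℂ, star a ⬝ᵥ (Bᴴ * B) *ᵥ b = star (B *ᵥ a) ⬝ᵥ (B *ᵥ b) := by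
    intro a b
    rw [← Matrix.mulVec_mulVec, Matrix.dotProduct_mulVec, ← Matrix.star_mulVec]
  rw [key, key, key]
  have := cs_dot (B *ᵥ x) (B *ᵥ g)
  linarith [this]

private lemma vecMulVec_quad (u v x : Fin n → ℂ) :
    star x ⬝ᵥ (vecMulVec u (star v)) *ᵥ x = (star x ⬝ᵥ u) * star (star x ⬝ᵥ v) := by
  have h1 : (vecMulVec u (star v)) *ᵥ x = (star v ⬝ᵥ x) • u := by
    ext i
    simp [Matrix.mulVec, Matrix.vecMulVec_apply, dotProduct, Finset.mul_sum, mul_comm,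
      mul_left_comm]
  rw [h1, dotProduct_smul]
  have h2 : star (star x ⬝ᵥ v) = star v ⬝ᵥ x := by
    rw [star_dotProduct, star_star]
  rw [← h2]
  simp [mul_comm]

private lemma vecMulVec_herm (u v : Fin n → ℂ) :
    (vecMulVec u (star v) + vecMulVec v (star u)).IsHermitian := by
  ext i j
  simp only [Matrix.conjTranspose_apply, Matrix.add_apply, Matrix.vecMulVec_apply,
    Pi.star_apply, star_add, star_mul', star_star]
  ring

private lemma vecMulVec_herm_self (u : Fin n → ℂ) :
    (vecMulVec u (star u)).IsHermitian := by
  ext i j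
  simp only [Matrix.conjTranspose_apply, Matrix.vecMulVec_apply, Pi.star_apply,
    star_mul', star_star]
  ring

private lemma exists_mulVec_ne_zero {M : Matrix (Fin n) (Fin n) ℂ} (hM : M ≠ 0) :
    ∃ v, M *ᵥ v ≠ 0 := by
  by_contra h
  push_neg at h
  apply hM
  ext i j
  have := congrFun (h (Pi.single j 1)) i
  simpa [Matrix.mulVec_single] using this

private lemma kappa_zero {κ ρ ε : ℝ} (hε : 0 < ε)
    (h : ∀ t : ℝ, |t| ≤ ε → t * κ + t ^ 2 * ρ ≤ 0) : κ = 0 := by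
  have key : ∀ κ' : ℝ, (∀ t : ℝ, |t| ≤ ε → t * κ' + t ^ 2 * ρ ≤ 0) → κ' ≤ 0 := by
    intro κ' h'
    by_contra hk
    push_neg at hk
    set t := min ε (κ' / (|ρ| + 1)) with htd
    have hρ : (0:ℝ) ≤ |ρ| := abs_nonneg ρ
    have ht1 : 0 < t := lt_min hε (div_pos hk (by linarith))
    have ht2 : |t| ≤ ε := by rw [abs_of_pos ht1]; exact min_le_left _ _
    have h3 := h' t ht2
    have h4 : t * |ρ| < κ' := by
      have h5 : t ≤ κ' / (|ρ| + 1) := min_le_right _ _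
      have h6 : t * |ρ| ≤ (κ' / (|ρ| + 1)) * |ρ| := by
        apply mul_le_mul_of_nonneg_right h5 hρ
      have h7 : (κ' / (|ρ| + 1)) * |ρ| < κ' := by
        rw [div_mul_eq_mul_div, div_lt_iff₀ (by linarith)]
        nlinarith
      linarith
    have h8 : t ^ 2 * ρ ≥ -(t * (t * |ρ|)) := by
      nlinarith [neg_abs_le ρ, sq_nonneg t, ht1.le]
    nlinarith
  have h1 := key κ h
  have h2 := key (-κ) (fun t ht => by
    have h3 := h (-t) (by rwa [abs_neg])
    nlinarith [h3])
  linarith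

private lemma real_ineq {β γ t rX N1 N2 R : ℝ} (hβ : 0 < β) (hγ : 0 < γ)
    (ht : t ^ 2 * (4 * β * γ) ≤ 1) (hN1 : 0 ≤ N1) (hN2 : 0 ≤ N2) (hrX0 : 0 ≤ rX)
    (hA1 : N1 ≤ β * rX) (hRsq : R ^ 2 ≤ N1 * N2) :
    0 ≤ rX + (t * (2 * R) + 2 * β * t ^ 2 * N2 - 2 * γ * t ^ 2 * N1) := by
  have step : 2 * |t| * |R| ≤ N1 / (2 * β) + 2 * β * t ^ 2 * N2 := by
    have h1 : (2 * |t| * |R|) ^ 2 ≤ 4 * t ^ 2 * (N1 * N2) := by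
      have ha := sq_abs t
      have hb := sq_abs R
      nlinarith [hRsq, sq_nonneg t]
    have h2 : (0:ℝ) ≤ N1 / (2 * β) + 2 * β * t ^ 2 * N2 := by positivity
    have h3 : (N1 / (2 * β) + 2 * β * t ^ 2 * N2) ^ 2 ≥ 4 * t ^ 2 * (N1 * N2) := by
      have hb2 : (0:ℝ) < 2 * β := by linarith
      have hexp : 4 * (N1 / (2 * β)) * (2 * β * t ^ 2 * N2) = 4 * t ^ 2 * (N1 * N2) := by
        field_simp
      nlinarith [sq_nonneg (N1 / (2 * β) - 2 * β * t ^ 2 * N2)]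
    nlinarith [mul_nonneg (mul_nonneg (by norm_num : (0:ℝ) ≤ 2) (abs_nonneg t)) (abs_nonneg R),
      h1, h2, h3]
  have h6 : -(2 * |t| * |R|) ≤ t * (2 * R) := by
    have habs : |t * (2 * R)| = 2 * |t| * |R| := by
      rw [abs_mul, abs_mul]
      simp [abs_of_nonneg]
      ring
    nlinarith [neg_abs_le (t * (2 * R))]
  have h7 : 2 * γ * t ^ 2 * N1 ≤ N1 / (2 * β) := by
    rw [le_div_iff₀ (by linarith : (0:ℝ) < 2 * β)]
    nlinarith [mul_le_mul_of_nonneg_left ht hN1]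
  have h8 : N1 / β ≤ rX := by
    rw [div_le_iff₀ hβ]
    nlinarith
  have h9 : N1 / (2 * β) + N1 / (2 * β) = N1 / β := by
    field_simp
    ring
  linarith [step, h6, h7, h8]

/-- The key PSD construction: a two-sided perturbation of a PSD matrix stays PSD. -/
private lemma psd_combo {X : Matrix (Fin n) (Fin n) ℂ} (hX : X.PosSemidef)
    (pv wv : Fin n → ℂ) {β γ t : ℝ} (hβ : 0 < β) (hγ : 0 < γ)
    (hBp : ∀ x, Complex.normSq (star x ⬝ᵥ pv) ≤ β * (star x ⬝ᵥ X *ᵥ x).re)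
    (ht : t ^ 2 * (4 * β * γ) ≤ 1) :
    (X + (t : ℂ) • (vecMulVec pv (star wv) + vecMulVec wv (star pv))
      + ((2 * β * t ^ 2 : ℝ) : ℂ) • vecMulVec wv (star wv)
      - ((2 * γ * t ^ 2 : ℝ) : ℂ) • vecMulVec pv (star pv)).PosSemidef := by
  refine Matrix.PosSemidef.of_dotProduct_mulVec_nonneg ?_ ?_
  · have hXh := hX.1
    have h1 := vecMulVec_herm pv wv
    have h2 := vecMulVec_herm_self wv
    have h3 := vecMulVec_herm_self pv
    unfold Matrix.IsHermitian at *
    simp only [Matrix.conjTranspose_add, Matrix.conjTranspose_sub, Matrix.conjTranspose_smul,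
      Complex.star_def, Complex.conj_ofReal, hXh, h1, h2, h3]
  · intro x
    set z₁ := star x ⬝ᵥ pv with hz₁
    set z₂ := star x ⬝ᵥ wv with hz₂
    have e1 : star x ⬝ᵥ (vecMulVec pv (star wv)) *ᵥ x = z₁ * star z₂ := vecMulVec_quad _ _ _
    have e2 : star x ⬝ᵥ (vecMulVec wv (star pv)) *ᵥ x = z₂ * star z₁ := vecMulVec_quad _ _ _
    have e3 : star x ⬝ᵥ (vecMulVec wv (star wv)) *ᵥ x = z₂ * star z₂ := vecMulVec_quad _ _ _
    have e4 : star x ⬝ᵥ (vecMulVec pv (star pv)) *ᵥ x = z₁ * star z₁ := vecMulVec_quad _ _ _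
    have hsplit : star x ⬝ᵥ (X + (t : ℂ) • (vecMulVec pv (star wv) + vecMulVec wv (star pv))
        + ((2 * β * t ^ 2 : ℝ) : ℂ) • vecMulVec wv (star wv)
        - ((2 * γ * t ^ 2 : ℝ) : ℂ) • vecMulVec pv (star pv)) *ᵥ x
        = star x ⬝ᵥ X *ᵥ x
          + (((t * (2 * (z₁ * star z₂).re) + 2 * β * t ^ 2 * Complex.normSq z₂
              - 2 * γ * t ^ 2 * Complex.normSq z₁ : ℝ)) : ℂ) := by
      simp only [Matrix.add_mulVec, Matrix.sub_mulVec, Matrix.smul_mulVec,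
        dotProduct_add, dotProduct_sub, dotProduct_smul, smul_eq_mul, e1, e2, e3, e4]
      have c1 : z₂ * star z₁ = star (z₁ * star z₂) := by
        rw [star_mul', star_star, mul_comm]
      have c3 : z₂ * star z₂ = ((Complex.normSq z₂ : ℝ) : ℂ) := by
        rw [Complex.star_def, Complex.mul_conj]
      have c4 : z₁ * star z₁ = ((Complex.normSq z₁ : ℝ) : ℂ) := by
        rw [Complex.star_def, Complex.mul_conj]
      rw [c1, c3, c4]
      set ζ := z₁ * star z₂ with hζ
      have c5 : ζ + star ζ = ((2 * ζ.re : ℝ) : ℂ) := by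
        rw [Complex.star_def, Complex.add_conj]
      rw [c5]
      push_cast
      ring
    rw [hsplit]
    have hX2 := hX.dotProduct_mulVec_nonneg x
    rw [Complex.le_def] at hX2 ⊢
    simp only [Complex.add_re, Complex.add_im, Complex.ofReal_re, Complex.ofReal_im,
      Complex.zero_re, Complex.zero_im] at hX2 ⊢
    refine ⟨?_, by linarith [hX2.2]⟩
    have hA1 : Complex.normSq z₁ ≤ β * (star x ⬝ᵥ X *ᵥ x).re := hBp x
    have hRsq : (z₁ * star z₂).re ^ 2 ≤ Complex.normSq z₁ * Complex.normSq z₂ := by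
      have h1 : (z₁ * star z₂).re ^ 2 ≤ Complex.normSq (z₁ * star z₂) := by
        rw [Complex.normSq_apply]
        nlinarith [sq_nonneg (z₁ * star z₂).im]
      have h2 : Complex.normSq (z₁ * star z₂) = Complex.normSq z₁ * Complex.normSq z₂ := by
        rw [Complex.normSq_mul, Complex.star_def, Complex.normSq_conj]
      linarith
    exact real_ineq hβ hγ ht (Complex.normSq_nonneg z₁) (Complex.normSq_nonneg z₂)
      hX2.1 hA1 hRsq

end Aux

/-- Every nonzero vertex `X` of a convex corner `C` (a boundary point
at which the intersection of all supporting hyperplanes, within `Herm(A)`, is the single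
point `X`) is maximal: `Y ≥ X` and `Y ≠ X` imply `Y ∉ C`. -/
theorem vertex_is_maximal {n : ℕ} (C : Set (Matrix (Fin n) (Fin n) ℂ))
    (hC : IsConvexCorner C) (X : Matrix (Fin n) (Fin n) ℂ) (hXC : X ∈ C)
    (hX0 : X ≠ 0) (hbd : X ∈ frontier C)
    (hvert : {Z : Matrix (Fin n) (Fin n) ℂ | Z.IsHermitian ∧
        ∀ Y : Matrix (Fin n) (Fin n) ℂ, Y.IsHermitian → ∀ α : ℝ,
          (∀ W ∈ C, ((W * Y).trace).re ≤ α) → ((X * Y).trace).re = α →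
            ((Z * Y).trace).re = α} = {X}) :
    ∀ Y : Matrix (Fin n) (Fin n) ℂ, (Y - X).PosSemidef → Y ≠ X → Y ∉ C := by
  intro Y hDpsd hYne hYC
  obtain ⟨-, -, -, hpsd, hher⟩ := hC
  have hXpsd := hpsd X hXC
  set D := Y - X with hDdef
  have hXh : X.IsHermitian := hXpsd.1
  have hD0 : D ≠ 0 := sub_ne_zero.mpr hYne
  obtain ⟨f, hf⟩ := exists_mulVec_ne_zero hX0
  obtain ⟨e, he⟩ := exists_mulVec_ne_zero hD0
  set p := X *ᵥ f with hpdef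
  set w := D *ᵥ e with hwdef
  set β := (star f ⬝ᵥ X *ᵥ f).re with hβdef
  set γ := (star e ⬝ᵥ D *ᵥ e).re with hγdef
  have hβ : 0 < β := by
    rcases lt_or_eq_of_le ((Complex.le_def.mp (hXpsd.dotProduct_mulVec_nonneg f)).1) with h | h
    · simpa [hβdef] using h
    · exfalso
      apply hf
      rw [← hXpsd.dotProduct_mulVec_zero_iff f]
      have him := (Complex.le_def.mp (hXpsd.dotProduct_mulVec_nonneg f)).2
      apply Complex.ext
      · simpa using h.symm
      · simpa using him.symm
  have hγ : 0 < γ := by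
    rcases lt_or_eq_of_le ((Complex.le_def.mp (hDpsd.dotProduct_mulVec_nonneg e)).1) with h | h
    · simpa [hγdef] using h
    · exfalso
      apply he
      rw [← hDpsd.dotProduct_mulVec_zero_iff e]
      have him := (Complex.le_def.mp (hDpsd.dotProduct_mulVec_nonneg e)).2
      apply Complex.ext
      · simpa using h.symm
      · simpa using him.symm
  -- choose a unimodular c making d nonzero
  have hc : ∃ c : ℂ, Complex.normSq c = 1 ∧
      vecMulVec (c • p) (star w) + vecMulVec w (star (c • p)) ≠ 0 := by
    by_contra h
    push_neg at h
    have h1 := h 1 (by simp)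
    have h2 := h Complex.I (by simp)
    have key : ∀ i j, p i * star (w j) = 0 := by
      intro i j
      have e1 := congrFun (congrFun h1 i) j
      have e2 := congrFun (congrFun h2 i) j
      simp only [Matrix.add_apply, Matrix.vecMulVec_apply, Pi.smul_apply, Pi.star_apply,
        smul_eq_mul, one_mul, star_mul', star_star, star_one, Matrix.zero_apply,
        Complex.star_def, _root_.map_one, Complex.conj_I] at e1 e2
      -- e1 : p i * (starRingEnd ℂ) (w j) + w i * (starRingEnd ℂ) (p j) = 0
      -- e2 : I * p i * conj (w j) + w i * (-I * conj (p j)) = 0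
      have hA : Complex.I * (p i * (starRingEnd ℂ) (w j) - w i * (starRingEnd ℂ) (p j)) = 0 := by
        rw [mul_sub]
        ring_nf
        ring_nf at e2
        linear_combination e2
      have hAB : p i * (starRingEnd ℂ) (w j) - w i * (starRingEnd ℂ) (p j) = 0 := by
        have := mul_eq_zero.mp hA
        rcases this with h' | h'
        · exact absurd h' Complex.I_ne_zero
        · exact h'
      have : (2:ℂ) * (p i * (starRingEnd ℂ) (w j)) = 0 := by linear_combination e1 + hAB
      have h2' := mul_eq_zero.mp this
      rcases h2' with h' | h'
      · norm_num at h'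
      · simpa [Complex.star_def] using h'
    obtain ⟨i, hi⟩ := Function.ne_iff.mp hf
    obtain ⟨j, hj⟩ := Function.ne_iff.mp he
    have := key i j
    rcases mul_eq_zero.mp this with h' | h'
    · exact hi h'
    · exact hj (by simpa using star_eq_zero.mp h')
  obtain ⟨c, hc1, hd0⟩ := hc
  set p' := c • p with hp'def
  set d := vecMulVec p' (star w) + vecMulVec w (star p') with hddef
  set W := vecMulVec w (star w) with hWdef
  set P := vecMulVec p' (star p') with hPdef
  -- Cauchy-Schwarz bounds
  have hBp : ∀ x, Complex.normSq (star x ⬝ᵥ p') ≤ β * (star x ⬝ᵥ X *ᵥ x).re := by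
    intro x
    have h1 : star x ⬝ᵥ p' = c * (star x ⬝ᵥ p) := by
      rw [hp'def, dotProduct_smul, smul_eq_mul]
    rw [h1, Complex.normSq_mul, hc1, one_mul]
    have := psd_cs hXpsd f x
    linarith [this]
  have hBw : ∀ x, Complex.normSq (star x ⬝ᵥ w) ≤ γ * (star x ⬝ᵥ D *ᵥ x).re := by
    intro x
    have := psd_cs hDpsd e x
    linarith [this]
  -- the curve
  set M : ℝ → Matrix (Fin n) (Fin n) ℂ := fun t =>
    X + (t : ℂ) • d + ((2 * β * t ^ 2 : ℝ) : ℂ) • W - ((2 * γ * t ^ 2 : ℝ) : ℂ) • P with hMdef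
  set ε := Real.sqrt (1 / (4 * β * γ)) with hεdef
  have hε : 0 < ε := Real.sqrt_pos.mpr (by positivity)
  have htsq : ∀ t : ℝ, |t| ≤ ε → t ^ 2 * (4 * β * γ) ≤ 1 := by
    intro t ht
    have h1 : t ^ 2 ≤ ε ^ 2 := by
      rw [← sq_abs t]
      exact pow_le_pow_left₀ (abs_nonneg t) ht 2
    have h2 : ε ^ 2 = 1 / (4 * β * γ) := Real.sq_sqrt (by positivity)
    rw [h2] at h1
    rw [← le_div_iff₀ (by positivity : (0:ℝ) < 4 * β * γ)]
    exact h1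
  have hmem : ∀ t : ℝ, |t| ≤ ε → M t ∈ C := by
    intro t ht
    have ht' := htsq t ht
    have hpsd1 : (M t).PosSemidef := by
      rw [hMdef]
      exact psd_combo hXpsd p' w hβ hγ hBp ht'
    have hpsd2 : (Y - M t).PosSemidef := by
      have heq : Y - M t = D + ((-t : ℝ) : ℂ) • (vecMulVec w (star p') + vecMulVec p' (star w))
          + ((2 * γ * (-t) ^ 2 : ℝ) : ℂ) • vecMulVec p' (star p')
          - ((2 * β * (-t) ^ 2 : ℝ) : ℂ) • vecMulVec w (star w) := by
        rw [hMdef, hDdef, hddef, hWdef, hPdef]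
        push_cast
        module
      rw [heq]
      have hBw' : ∀ x, Complex.normSq (star x ⬝ᵥ w) ≤ γ * (star x ⬝ᵥ D *ᵥ x).re := hBw
      have ht'' : (-t) ^ 2 * (4 * γ * β) ≤ 1 := by
        rw [neg_pow]
        ring_nf
        ring_nf at ht'
        linarith
      exact psd_combo hDpsd w p' hγ hβ hBw' ht''
    exact hher Y hYC (M t) hpsd1 hpsd2
  -- the vertex argument
  have hdh : d.IsHermitian := vecMulVec_herm p' w
  have hZ : (X + d) ∈ {Z : Matrix (Fin n) (Fin n) ℂ | Z.IsHermitian ∧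
      ∀ Y : Matrix (Fin n) (Fin n) ℂ, Y.IsHermitian → ∀ α : ℝ,
        (∀ W ∈ C, ((W * Y).trace).re ≤ α) → ((X * Y).trace).re = α →
          ((Z * Y).trace).re = α} := by
    refine ⟨hXh.add hdh, ?_⟩
    intro Y' hY' α hsup heq
    set κ := ((d * Y').trace).re with hκdef
    set ρ := 2 * β * ((W * Y').trace).re - 2 * γ * ((P * Y').trace).re with hρdef
    have htr : ∀ t : ℝ, ((M t * Y').trace).re = ((X * Y').trace).re + t * κ + t ^ 2 * ρ := by
      intro t
      have hexp : M t * Y' = X * Y' + (t : ℂ) • (d * Y') + ((2 * β * t ^ 2 : ℝ) : ℂ) • (W * Y')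
          - ((2 * γ * t ^ 2 : ℝ) : ℂ) • (P * Y') := by
        rw [hMdef]
        simp only [Matrix.add_mul, Matrix.sub_mul, Matrix.smul_mul]
      rw [hexp]
      simp only [Matrix.trace_add, Matrix.trace_sub, Matrix.trace_smul, smul_eq_mul,
        Complex.add_re, Complex.sub_re, Complex.re_ofReal_mul]
      rw [hκdef, hρdef]
      ring
    have hineq : ∀ t : ℝ, |t| ≤ ε → t * κ + t ^ 2 * ρ ≤ 0 := by
      intro t ht
      have := hsup (M t) (hmem t ht)
      rw [htr t, heq] at this
      linarith
    have hκ0 : κ = 0 := kappa_zero hε hineq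
    have : ((X + d) * Y').trace.re = ((X * Y').trace).re + κ := by
      rw [Matrix.add_mul, Matrix.trace_add, Complex.add_re, hκdef]
    rw [this, hκ0, heq, add_zero]
  rw [hvert] at hZ
  have : X + d = X := hZ
  exact hd0 (by simpa using this)
end
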